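/- arXiv:1003.3329 — 2 statements merged into one kernel-verified Lean document; each statement's English description precedes it below -/
import Mathlib

section
/- For 1 < k < n-1, every maximal clique of the Grassmann graph Γ_k(V) is either a star [M⟩_k = {S ∈ G_k(V) : M ⊂ S} for some (k-1)-dimensional subspace M, or a top ⟨N]_k = {S ∈ G_k(V) : S ⊂ N} for some (k+1)-dimensional subspace N. -/
open Module

/-- The Grassmann graph `Γ_k(V)`. -/
def GrassmannGraph (K V : Type*) [DivisionRing K] [AddCommGroup V] [Module K V] (k : ℕ) :
    SimpleGraph {S : Submodule K V // finrank K S = k} where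
  Adj S U := S ≠ U ∧ finrank K ↥(S.1 ⊓ U.1) = k - 1
  symm := ⟨by
    rintro S U ⟨h1, h2⟩
    refine ⟨h1.symm, ?_⟩
    rwa [inf_comm]⟩
  loopless := ⟨by rintro S ⟨h, -⟩; exact h rfl⟩

section Aux

variable {K V : Type*} [DivisionRing K] [AddCommGroup V] [Module K V] [FiniteDimensional K V]

lemma aux_exists_finrank_eq (m : ℕ) (hm : m ≤ finrank K V) :
    ∃ W : Submodule K V, finrank K W = m := by
  have b := finBasis K V
  refine ⟨Submodule.span K (Set.range (fun i : Fin m => b (Fin.castLE hm i))), ?_⟩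
  have hli : LinearIndependent K (fun i : Fin m => b (Fin.castLE hm i)) :=
    b.linearIndependent.comp _ (Fin.castLE_injective hm)
  rw [finrank_span_eq_card hli, Fintype.card_fin]

lemma aux_exists_le_finrank_eq (W : Submodule K V) (m : ℕ) (hm : m ≤ finrank K W) :
    ∃ W' : Submodule K V, W' ≤ W ∧ finrank K W' = m := by
  obtain ⟨W'', h⟩ := aux_exists_finrank_eq (K := K) (V := ↥W) m hm
  exact ⟨W''.map W.subtype, Submodule.map_subtype_le _ _, by
    rw [Submodule.finrank_map_subtype_eq]; exact h⟩

lemma aux_exists_neighbor (S : Submodule K V) {k : ℕ} (hS : finrank K S = k)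
    (hk : 0 < k) (hkn : k < finrank K V) :
    ∃ U : Submodule K V, finrank K U = k ∧ U ≠ S ∧ finrank K ↥(S ⊓ U) = k - 1 := by
  obtain ⟨H, hHS, hH⟩ := aux_exists_le_finrank_eq S (k - 1) (by omega)
  have hSne : S ≠ ⊤ := by
    intro h
    rw [h, finrank_top] at hS
    omega
  obtain ⟨v, -, hvS⟩ := SetLike.exists_of_lt
    (show S < (⊤ : Submodule K V) from lt_top_iff_ne_top.mpr hSne)
  have hv0 : v ≠ 0 := fun h => hvS (h ▸ S.zero_mem)
  set U : Submodule K V := H ⊔ K ∙ v with hU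
  have hinf : H ⊓ (K ∙ v) = ⊥ := by
    rw [eq_bot_iff]
    rintro x ⟨hxH, hxv⟩
    obtain ⟨c, rfl⟩ := Submodule.mem_span_singleton.mp hxv
    rcases eq_or_ne c 0 with rfl | hc
    · simp
    · exfalso
      apply hvS
      have : c • v ∈ S := hHS hxH
      have := S.smul_mem c⁻¹ this
      rwa [smul_smul, inv_mul_cancel₀ hc, one_smul] at this
  have hUrank : finrank K U = k := by
    have := Submodule.finrank_sup_add_finrank_inf_eq H (K ∙ v)
    rw [hinf, finrank_bot, finrank_span_singleton hv0, hH, ← hU] at this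
    omega
  have hvU : v ∈ U := Submodule.mem_sup_right (Submodule.mem_span_singleton_self v)
  have hUS : U ≠ S := fun h => hvS (h ▸ hvU)
  refine ⟨U, hUrank, hUS, ?_⟩
  have hHle : H ≤ S ⊓ U := le_inf hHS le_sup_left
  have h1 : finrank K ↥(S ⊓ U) ≤ k := hUrank ▸ Submodule.finrank_mono inf_le_right
  have h2 : finrank K ↥(S ⊓ U) ≠ k := by
    intro h
    have : S ⊓ U = U := Submodule.eq_of_le_of_finrank_le inf_le_right (by omega)
    exact hvS (inf_le_left (α := Submodule K V) (this ▸ hvU))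
  have h3 : k - 1 ≤ finrank K ↥(S ⊓ U) := hH ▸ Submodule.finrank_mono hHle
  omega

lemma aux_star_isClique (M : Submodule K V) {k : ℕ} (hM : finrank K M = k - 1) (hk : 0 < k) :
    (GrassmannGraph K V k).IsClique {S | M ≤ S.1} := by
  rintro ⟨S, hS⟩ h1 ⟨U, hU⟩ h2 hne
  refine ⟨hne, show finrank K ↥(S ⊓ U) = k - 1 from ?_⟩
  have hMle : M ≤ S ⊓ U := le_inf h1 h2
  have h3 : finrank K ↥(S ⊓ U) ≤ k := hS ▸ Submodule.finrank_mono inf_le_left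
  have h4 : k - 1 ≤ finrank K ↥(S ⊓ U) := hM ▸ Submodule.finrank_mono hMle
  have h5 : finrank K ↥(S ⊓ U) ≠ k := by
    intro h
    have e1 : S ⊓ U = S := Submodule.eq_of_le_of_finrank_le inf_le_left (by omega)
    have e2 : S ⊓ U = U := Submodule.eq_of_le_of_finrank_le inf_le_right (by omega)
    exact hne (Subtype.ext (e1.symm.trans e2))
  omega

lemma aux_top_isClique (N : Submodule K V) {k : ℕ} (hN : finrank K N = k + 1) (hk : 0 < k) :
    (GrassmannGraph K V k).IsClique {S | S.1 ≤ N} := by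
  rintro ⟨S, hS⟩ h1 ⟨U, hU⟩ h2 hne
  refine ⟨hne, show finrank K ↥(S ⊓ U) = k - 1 from ?_⟩
  have hsupN : S ⊔ U ≤ N := sup_le h1 h2
  have h3 : finrank K ↥(S ⊔ U) ≤ k + 1 := hN ▸ Submodule.finrank_mono hsupN
  have h4 : finrank K ↥(S ⊔ U) ≠ k := by
    intro h
    have e1 : S = S ⊔ U := Submodule.eq_of_le_of_finrank_le le_sup_left (by omega)
    have e2 : U = S ⊔ U := Submodule.eq_of_le_of_finrank_le le_sup_right (by omega)
    exact hne (Subtype.ext (e1.trans e2.symm))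
  have h5 : k ≤ finrank K ↥(S ⊔ U) := hS ▸ Submodule.finrank_mono le_sup_left
  have key := Submodule.finrank_sup_add_finrank_inf_eq S U
  rw [hS, hU] at key
  omega

end Aux

theorem stmt10 (K V : Type*) [DivisionRing K] [AddCommGroup V] [Module K V]
    [FiniteDimensional K V] (n k : ℕ) (hn : finrank K V = n) (hn4 : 4 ≤ n)
    (hk1 : 1 < k) (hk2 : k < n - 1)
    (C : Set {S : Submodule K V // finrank K S = k})
    (hC : (GrassmannGraph K V k).IsClique C)
    (hmax : ∀ D, (GrassmannGraph K V k).IsClique D → C ⊆ D → C = D) :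
    (∃ M : Submodule K V, finrank K ↥M = k - 1 ∧ C = {S | M ≤ S.1}) ∨
    (∃ N : Submodule K V, finrank K ↥N = k + 1 ∧ C = {S | S.1 ≤ N}) := by
  classical
  have hkn : k < finrank K V := by omega
  have hk0 : 0 < k := by omega
  -- C is nonempty
  have hCne : C.Nonempty := by
    rw [Set.nonempty_iff_ne_empty]
    intro h
    obtain ⟨S₀, hS₀⟩ := aux_exists_finrank_eq (K := K) (V := V) k (by omega)
    have hsing : (GrassmannGraph K V k).IsClique
        {(⟨S₀, hS₀⟩ : {S : Submodule K V // finrank K S = k})} :=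
      Set.pairwise_singleton _ _
    have := hmax _ hsing (by rw [h]; exact Set.empty_subset _)
    rw [h] at this
    exact Set.singleton_ne_empty _ this.symm
  obtain ⟨S, hS⟩ := hCne
  -- C has two distinct elements
  have h2elts : ∃ U ∈ C, U ≠ S := by
    by_contra h
    push_neg at h
    obtain ⟨U, hUr, hUS, hUinf⟩ := aux_exists_neighbor S.1 S.2 hk0 hkn
    set U' : {S : Submodule K V // finrank K S = k} := ⟨U, hUr⟩ with hU'
    have hU'S : U' ≠ S := fun heq => hUS (congrArg Subtype.val heq)
    have hadj' : (GrassmannGraph K V k).Adj S U' := ⟨Ne.symm hU'S, hUinf⟩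
    have hpair : (GrassmannGraph K V k).IsClique {S, U'} := by
      rintro a (rfl | rfl) b (rfl | rfl) hab
      · exact absurd rfl hab
      · exact hadj'
      · exact hadj'.symm
      · exact absurd rfl hab
    have hCeq := hmax _ hpair (fun T hT => by rw [h T hT]; exact Set.mem_insert _ _)
    have : U' ∈ C := hCeq ▸ Set.mem_insert_iff.mpr (Or.inr rfl)
    exact hU'S (h U' this)
  obtain ⟨U, hU, hUS⟩ := h2elts
  have hadj : S ≠ U ∧ finrank K ↥(S.1 ⊓ U.1) = k - 1 := hC hS hU hUS.symm
  set M : Submodule K V := S.1 ⊓ U.1 with hMdef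
  set N : Submodule K V := S.1 ⊔ U.1 with hNdef
  have hMrank : finrank K ↥M = k - 1 := hadj.2
  have hNrank : finrank K ↥N = k + 1 := by
    have key := Submodule.finrank_sup_add_finrank_inf_eq S.1 U.1
    rw [S.2, U.2, ← hMdef, ← hNdef, hMrank] at key
    omega
  have hMN : M ≤ N := le_trans inf_le_left le_sup_left
  -- key dichotomy for each T in C
  have key : ∀ T ∈ C, M ≤ T.1 ∨ T.1 ≤ N := by
    intro T hT
    by_cases hTS : T = S
    · exact Or.inl (hTS ▸ inf_le_left)
    by_cases hTU : T = U
    · exact Or.inl (hTU ▸ inf_le_right)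
    have a1 : finrank K ↥(T.1 ⊓ S.1) = k - 1 := (hC hT hS hTS).2
    have a2 : finrank K ↥(T.1 ⊓ U.1) = k - 1 := (hC hT hU hTU).2
    by_cases heq : T.1 ⊓ S.1 = T.1 ⊓ U.1
    · left
      have hle : T.1 ⊓ S.1 ≤ M :=
        le_inf (inf_le_right) (heq ▸ inf_le_right (a := T.1) (b := U.1))
      have : T.1 ⊓ S.1 = M :=
        Submodule.eq_of_le_of_finrank_le hle (by omega)
      exact this ▸ inf_le_left
    · right
      set A := T.1 ⊓ S.1 with hA
      set B := T.1 ⊓ U.1 with hB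
      have hABne : finrank K ↥(A ⊓ B) ≠ k - 1 := by
        intro h
        have : A ⊓ B = A := Submodule.eq_of_le_of_finrank_le inf_le_left (by omega)
        have hAB : A ≤ B := by rw [← this]; exact inf_le_right
        exact heq (Submodule.eq_of_le_of_finrank_le hAB (by omega))
      have hABle : finrank K ↥(A ⊓ B) ≤ k - 1 := a1 ▸ Submodule.finrank_mono inf_le_left
      have hsupT : A ⊔ B ≤ T.1 := sup_le inf_le_left inf_le_left
      have hsuple : finrank K ↥(A ⊔ B) ≤ k := T.2 ▸ Submodule.finrank_mono hsupT
      have hform := Submodule.finrank_sup_add_finrank_inf_eq A B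
      rw [a1, a2] at hform
      have hsupeq : finrank K ↥(A ⊔ B) = k := by omega
      have : A ⊔ B = T.1 := Submodule.eq_of_le_of_finrank_le hsupT (by omega)
      rw [← this]
      exact sup_le (le_trans inf_le_right le_sup_left) (le_trans inf_le_right le_sup_right)
  by_cases hstar : ∀ T ∈ C, M ≤ T.1
  · left
    exact ⟨M, hMrank, hmax _ (aux_star_isClique M hMrank hk0) hstar⟩
  by_cases htop : ∀ T ∈ C, T.1 ≤ N
  · right
    exact ⟨N, hNrank, hmax _ (aux_top_isClique N hNrank hk0) htop⟩
  exfalso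
  push_neg at hstar htop
  obtain ⟨T₁, hT₁C, hT₁⟩ := hstar
  obtain ⟨T₂, hT₂C, hT₂⟩ := htop
  have hT₁N : T₁.1 ≤ N := (key T₁ hT₁C).resolve_left hT₁
  have hMT₂ : M ≤ T₂.1 := (key T₂ hT₂C).resolve_right hT₂
  have hT₁₂ : T₁ ≠ T₂ := fun h => hT₁ (h ▸ hMT₂)
  have hadj12 : finrank K ↥(T₁.1 ⊓ T₂.1) = k - 1 := (hC hT₁C hT₂C hT₁₂).2
  have hMle : M ≤ T₂.1 ⊓ N := le_inf hMT₂ hMN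
  have hinfne : finrank K ↥(T₂.1 ⊓ N) ≠ k := by
    intro h
    have : T₂.1 ⊓ N = T₂.1 := Submodule.eq_of_le_of_finrank_le inf_le_left (by omega)
    exact hT₂ (by rw [← this]; exact inf_le_right)
  have hinfle : finrank K ↥(T₂.1 ⊓ N) ≤ k := by
    have h := Submodule.finrank_mono (inf_le_left : T₂.1 ⊓ N ≤ T₂.1)
    rwa [T₂.2] at h
  have hMeq : M = T₂.1 ⊓ N := Submodule.eq_of_le_of_finrank_le hMle (by omega)
  have h12le : T₁.1 ⊓ T₂.1 ≤ M := by
    rw [hMeq]; exact le_inf inf_le_right (le_trans inf_le_left hT₁N)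
  have : T₁.1 ⊓ T₂.1 = M := Submodule.eq_of_le_of_finrank_le h12le (by omega)
  exact hT₁ (by rw [← this]; exact inf_le_left)
end

section
/- If n ≠ 2m, then every automorphism of the Johnson graph J(n,m) is induced by a permutation of the underlying n-element set. -/
/-- The Johnson graph `J(n,m)`. -/
def JohnsonGraph (n m : ℕ) : SimpleGraph {A : Finset (Fin n) // A.card = m} where
  Adj A B := A ≠ B ∧ (A.1 ∩ B.1).card = m - 1
  symm := by
    constructor
    rintro A B ⟨h1, h2⟩
    refine ⟨h1.symm, ?_⟩
    rwa [Finset.inter_comm]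
  loopless := by constructor; rintro A ⟨h, -⟩; exact h rfl

open Finset

lemma sunflower {n m : ℕ} (hm : 1 ≤ m) (F : Finset (Finset (Fin n)))
    (hcard : ∀ A ∈ F, A.card = m)
    (hpair : ∀ A ∈ F, ∀ B ∈ F, A ≠ B → (A ∩ B).card = m - 1)
    (hF : m + 2 ≤ F.card) :
    ∃ C : Finset (Fin n), C.card = m - 1 ∧ ∀ A ∈ F, C ⊆ A := by
  obtain ⟨A, hA, B, hB, hAB⟩ := Finset.one_lt_card.mp (show 1 < F.card by omega)
  set C0 := A ∩ B with hC0
  have hC0card : C0.card = m - 1 := hpair A hA B hB hAB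
  -- claim 1: any D in F either contains C0 or is inside A ∪ B
  have claim1 : ∀ D ∈ F, C0 ⊆ D ∨ D ⊆ A ∪ B := by
    intro D hD
    by_cases hDA : D = A
    · subst hDA; right; exact subset_union_left
    by_cases hDB : D = B
    · subst hDB; right; exact subset_union_right
    by_cases hsub : C0 ⊆ D
    · left; exact hsub
    right
    have h1 : (D ∩ A).card = m - 1 := hpair D hD A hA hDA
    have h2 : (D ∩ B).card = m - 1 := hpair D hD B hB hDB
    have hu : D ∩ (A ∪ B) = (D ∩ A) ∪ (D ∩ B) := by rw [inter_union_distrib_left]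
    have hi : (D ∩ A) ∩ (D ∩ B) = D ∩ C0 := by rw [hC0]; ext x; simp; tauto
    have key : ((D ∩ A) ∪ (D ∩ B)).card + ((D ∩ A) ∩ (D ∩ B)).card = (m-1) + (m-1) :=
      by rw [card_union_add_card_inter, h1, h2]
    rw [hi] at key
    have hlt : (D ∩ C0).card < m - 1 := by
      have hss : D ∩ C0 ⊂ C0 := by
        refine Finset.ssubset_iff_subset_ne.mpr ⟨inter_subset_right, fun h => ?_⟩
        exact hsub (by rw [← h]; exact inter_subset_left)
      have := card_lt_card hss; omega
    have hle : (D ∩ (A ∪ B)).card ≤ D.card := card_le_card inter_subset_left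
    have hDcard : D.card = m := hcard D hD
    have : D.card ≤ (D ∩ (A ∪ B)).card := by rw [hu]; omega
    have heq : D ∩ (A ∪ B) = D := eq_of_subset_of_card_le inter_subset_left (by omega)
    intro x hx
    have hx2 : x ∈ D ∩ (A ∪ B) := by rw [heq]; exact hx
    exact (mem_inter.mp hx2).2
  by_cases hall : ∀ D ∈ F, C0 ⊆ D
  · exact ⟨C0, hC0card, hall⟩
  push_neg at hall
  obtain ⟨D, hD, hnD⟩ := hall
  exfalso
  have hDsub : D ⊆ A ∪ B := (claim1 D hD).resolve_left hnD
  have hDA : D ≠ A := by rintro rfl; exact hnD inter_subset_left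
  have hDB : D ≠ B := by rintro rfl; exact hnD inter_subset_right
  -- every E in F is inside A ∪ B
  have hABcard : (A ∪ B).card = m + 1 := by
    have := card_union_add_card_inter A B
    rw [hC0] at *; rw [hcard A hA, hcard B hB] at this; omega
  have claim2 : ∀ E ∈ F, E ⊆ A ∪ B := by
    intro E hE
    rcases claim1 E hE with hCE | h
    · by_cases hEA : E = A
      · subst hEA; exact subset_union_left
      by_cases hEB : E = B
      · subst hEB; exact subset_union_right
      exfalso
      -- E ∩ (A ∪ B) = C0
      have h1 : (E ∩ A).card = m - 1 := hpair E hE A hA hEA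
      have h2 : (E ∩ B).card = m - 1 := hpair E hE B hB hEB
      have hu : E ∩ (A ∪ B) = (E ∩ A) ∪ (E ∩ B) := by rw [inter_union_distrib_left]
      have hi : (E ∩ A) ∩ (E ∩ B) = E ∩ C0 := by rw [hC0]; ext x; simp; tauto
      have key : ((E ∩ A) ∪ (E ∩ B)).card + ((E ∩ A) ∩ (E ∩ B)).card = (m-1) + (m-1) :=
        by rw [card_union_add_card_inter, h1, h2]
      rw [hi] at key
      have hEC0 : E ∩ C0 = C0 := inter_eq_right.mpr hCE
      rw [hEC0, hC0card] at key
      have hEScard : (E ∩ (A ∪ B)).card = m - 1 := by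
        rw [hu]; omega
      have hCsub : C0 ⊆ E ∩ (A ∪ B) := by
        intro x hx
        exact mem_inter.mpr ⟨hCE hx, mem_union_left B (mem_inter.mp hx).1⟩
      have hES : C0 = E ∩ (A ∪ B) :=
        eq_of_subset_of_card_le hCsub (by omega)
      have hED : E ≠ D := by rintro rfl; exact hnD hCE
      have hEDcard : (E ∩ D).card = m - 1 := hpair E hE D hD hED
      have hsub2 : E ∩ D ⊆ D ∩ C0 := by
        intro x hx
        have hx' := mem_inter.mp hx
        exact mem_inter.mpr ⟨hx'.2, hES ▸ mem_inter.mpr ⟨hx'.1, hDsub hx'.2⟩⟩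
      have hlt2 : (D ∩ C0).card < m - 1 := by
        have hss : D ∩ C0 ⊂ C0 := by
          refine Finset.ssubset_iff_subset_ne.mpr ⟨inter_subset_right, fun h => ?_⟩
          exact hnD (by rw [← h]; exact inter_subset_left)
        have := card_lt_card hss; omega
      have := card_le_card hsub2
      omega
    · exact h
  have hsubp : F ⊆ (A ∪ B).powersetCard m := by
    intro E hE
    exact mem_powersetCard.mpr ⟨claim2 E hE, hcard E hE⟩
  have := card_le_card hsubp
  rw [card_powersetCard, hABcard] at this
  have hch : (m+1).choose m = m + 1 := Nat.choose_succ_self_right m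
  omega

lemma star_card {n m : ℕ} (C : Finset (Fin n)) (hC : C.card = m) :
    (Finset.univ.filter fun A : {A : Finset (Fin n) // A.card = m + 1} => C ⊆ A.1).card
      = n - m := by
  have key : Cᶜ.card =
      (Finset.univ.filter fun A : {A : Finset (Fin n) // A.card = m + 1} => C ⊆ A.1).card := by
    apply Finset.card_bij (fun a ha => (⟨insert a C, by
        rw [card_insert_of_notMem (mem_compl.mp ha), hC]⟩ :
          {A : Finset (Fin n) // A.card = m + 1}))
    · intro a ha
      exact mem_filter.mpr ⟨mem_univ _, subset_insert a C⟩
    · intro a1 ha1 a2 ha2 h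
      have h' : insert a1 C = insert a2 C := congrArg Subtype.val h
      have : a1 ∈ insert a2 C := h' ▸ mem_insert_self a1 C
      rcases mem_insert.mp this with h2 | h2
      · exact h2
      · exact absurd h2 (mem_compl.mp ha1)
    · intro A hA
      have hCA : C ⊆ A.1 := (mem_filter.mp hA).2
      have hsd : (A.1 \ C).card = 1 := by
        rw [card_sdiff_of_subset hCA, A.2, hC]; omega
      obtain ⟨a, ha⟩ := card_pos.mp (by omega : 0 < (A.1 \ C).card)
      have haA := (mem_sdiff.mp ha).1
      have haC := (mem_sdiff.mp ha).2
      refine ⟨a, mem_compl.mpr haC, ?_⟩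
      apply Subtype.ext
      show insert a C = A.1
      apply eq_of_subset_of_card_le
      · intro x hx
        rcases mem_insert.mp hx with rfl | hx2
        · exact haA
        · exact hCA hx2
      · rw [card_insert_of_notMem haC, hC, A.2]
  rw [← key, card_compl, Fintype.card_fin, hC]

lemma key_base {n : ℕ} (φ : JohnsonGraph n 1 ≃g JohnsonGraph n 1) :
    ∃ σ : Equiv.Perm (Fin n), ∀ A, (φ A).1 = A.1.image σ := by
  have hne : ∀ x : Fin n, (φ ⟨{x}, card_singleton x⟩).1.Nonempty := by
    intro x
    apply card_pos.mp
    rw [(φ ⟨{x}, card_singleton x⟩).2]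
    norm_num
  set f : Fin n → Fin n := fun x => (φ ⟨{x}, card_singleton x⟩).1.min' (hne x) with hf
  have hsing : ∀ x, (φ ⟨{x}, card_singleton x⟩).1 = {f x} := by
    intro x
    obtain ⟨a, ha⟩ := card_eq_one.mp (φ ⟨{x}, card_singleton x⟩).2
    symm
    apply eq_of_subset_of_card_le
    · rw [singleton_subset_iff]; exact min'_mem _ _
    · rw [(φ ⟨{x}, card_singleton x⟩).2, card_singleton]
  have hinj : Function.Injective f := by
    intro x y hxy
    have : φ ⟨{x}, card_singleton x⟩ = φ ⟨{y}, card_singleton y⟩ := by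
      apply Subtype.ext; rw [hsing x, hsing y, hxy]
    have := φ.toEquiv.injective this
    have := congrArg Subtype.val this
    simpa using this
  refine ⟨Equiv.ofBijective f ((Finite.injective_iff_bijective).mp hinj), ?_⟩
  intro A
  obtain ⟨x, hx⟩ := card_eq_one.mp A.2
  have hA : A = ⟨{x}, card_singleton x⟩ := Subtype.ext hx
  rw [hA, hsing x]
  simp [Equiv.ofBijective]

lemma key_main (m : ℕ) : ∀ n : ℕ, 1 ≤ m → 2 * m < n →
    ∀ φ : JohnsonGraph n m ≃g JohnsonGraph n m,
    ∃ σ : Equiv.Perm (Fin n), ∀ A, (φ A).1 = A.1.image σ := by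
  induction m with
  | zero => intro n h; omega
  | succ m ih =>
    intro n _ hlt φ
    rcases Nat.eq_zero_or_pos m with rfl | hm
    · exact key_base φ
    -- notation
    set V := {A : Finset (Fin n) // A.card = m + 1}
    set K : Finset (Fin n) → Finset V := fun C => Finset.univ.filter (fun A => C ⊆ A.1)
      with hK
    have hmemK : ∀ (C : Finset (Fin n)) (A : V), A ∈ K C ↔ C ⊆ A.1 := by
      intro C A; rw [hK]; simp
    have hKcard : ∀ C : Finset (Fin n), C.card = m → (K C).card = n - m :=
      fun C hC => star_card C hC
    -- intersection of two distinct members of K C is C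
    have hinter : ∀ (C : Finset (Fin n)), C.card = m → ∀ A1 A2 : V,
        C ⊆ A1.1 → C ⊆ A2.1 → A1 ≠ A2 → A1.1 ∩ A2.1 = C := by
      intro C hC A1 A2 h1 h2 hne
      have hsub : C ⊆ A1.1 ∩ A2.1 := subset_inter h1 h2
      have hle : (A1.1 ∩ A2.1).card ≤ m := by
        by_contra h
        push_neg at h
        have e1 : A1.1 ∩ A2.1 = A1.1 :=
          eq_of_subset_of_card_le inter_subset_left (by rw [A1.2]; omega)
        have e2 : A1.1 ∩ A2.1 = A2.1 :=
          eq_of_subset_of_card_le inter_subset_right (by rw [A2.2]; omega)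
        exact hne (Subtype.ext (e1 ▸ e2))
      exact (eq_of_subset_of_card_le hsub (by rw [hC]; exact hle)).symm
    -- adjacency of two distinct members of K C
    have hadjK : ∀ (C : Finset (Fin n)), C.card = m → ∀ A1 A2 : V, A1 ∈ K C → A2 ∈ K C →
        A1 ≠ A2 → (JohnsonGraph n (m+1)).Adj A1 A2 := by
      intro C hC A1 A2 h1 h2 hne
      refine ⟨hne, ?_⟩
      rw [hinter C hC A1 A2 ((hmemK C A1).mp h1) ((hmemK C A2).mp h2) hne, hC]
      omega
    -- existence and spec of ψ
    have hexu : ∀ C : {C : Finset (Fin n) // C.card = m}, ∃ C' : Finset (Fin n),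
        C'.card = m ∧ ∀ A : V, C.1 ⊆ A.1 → C' ⊆ (φ A).1 := by
      intro C
      set F : Finset (Finset (Fin n)) := (K C.1).image (fun A => (φ A).1) with hF
      have hFcard : F.card = n - m := by
        rw [hF, card_image_of_injOn]
        · exact hKcard C.1 C.2
        · intro A1 _ A2 _ h
          exact φ.toEquiv.injective (Subtype.ext h)
      have hsun := sunflower (m := m + 1) (by omega) F ?_ ?_ ?_
      · obtain ⟨C', hC'card, hC'⟩ := hsun
        refine ⟨C', by omega, ?_⟩
        intro A hA
        exact hC' (φ A).1 (mem_image_of_mem _ ((hmemK C.1 A).mpr hA))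
      · intro A hA
        rw [hF] at hA
        obtain ⟨B, _, rfl⟩ := mem_image.mp hA
        exact (φ B).2
      · intro X hX Y hY hXY
        rw [hF] at hX hY
        obtain ⟨A1, hA1, rfl⟩ := mem_image.mp hX
        obtain ⟨A2, hA2, rfl⟩ := mem_image.mp hY
        have hne : A1 ≠ A2 := by rintro rfl; exact hXY rfl
        have hadj := (φ.map_rel_iff').mpr (hadjK C.1 C.2 A1 A2 hA1 hA2 hne)
        exact hadj.2
      · rw [hFcard]; omega
    set ψ : {C : Finset (Fin n) // C.card = m} → {C : Finset (Fin n) // C.card = m} :=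
      fun C => ⟨(hexu C).choose, (hexu C).choose_spec.1⟩ with hψdef
    have hψ : ∀ (C : {C : Finset (Fin n) // C.card = m}) (A : V),
        C.1 ⊆ A.1 → (ψ C).1 ⊆ (φ A).1 := fun C A h => (hexu C).choose_spec.2 A h
    -- φ maps K C onto K (ψ C)
    have hKim : ∀ C : {C : Finset (Fin n) // C.card = m},
        (K C.1).image φ = K (ψ C).1 := by
      intro C
      apply eq_of_subset_of_card_le
      · intro X hX
        obtain ⟨A, hA, rfl⟩ := mem_image.mp hX
        exact (hmemK _ _).mpr (hψ C A ((hmemK C.1 A).mp hA))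
      · rw [card_image_of_injective _ φ.injective,
          hKcard C.1 C.2, hKcard (ψ C).1 (ψ C).2]
    -- two distinct elements of K C
    have htwo : ∀ C : {C : Finset (Fin n) // C.card = m},
        ∃ A1 A2 : V, A1 ∈ K C.1 ∧ A2 ∈ K C.1 ∧ A1 ≠ A2 := by
      intro C
      have : 1 < (K C.1).card := by rw [hKcard C.1 C.2]; omega
      obtain ⟨A1, h1, A2, h2, hne⟩ := one_lt_card.mp this
      exact ⟨A1, A2, h1, h2, hne⟩
    -- ψ is injective
    have hψinj : Function.Injective ψ := by
      intro C D h
      have hKK : K C.1 = K D.1 := by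
        have := hKim C
        rw [h] at *
        have h2 := hKim D
        have := this.trans h2.symm
        exact image_injective φ.toEquiv.injective this
      obtain ⟨A1, A2, h1, h2, hne⟩ := htwo C
      have hC : C.1 = A1.1 ∩ A2.1 :=
        (hinter C.1 C.2 A1 A2 ((hmemK _ _).mp h1) ((hmemK _ _).mp h2) hne).symm
      have hD : D.1 = A1.1 ∩ A2.1 := by
        rw [hKK] at h1 h2
        exact (hinter D.1 D.2 A1 A2 ((hmemK _ _).mp h1) ((hmemK _ _).mp h2) hne).symm
      exact Subtype.ext (hC.trans hD.symm)
    -- adjacency characterization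
    have hadj_iff : ∀ C D : {C : Finset (Fin n) // C.card = m},
        (JohnsonGraph n m).Adj (ψ C) (ψ D) ↔ (JohnsonGraph n m).Adj C D := by
      intro C D
      constructor
      · rintro ⟨hne', hcard'⟩
        have hCD : C ≠ D := by rintro rfl; exact hne' rfl
        have hu : ((ψ C).1 ∪ (ψ D).1).card = m + 1 := by
          have := card_union_add_card_inter (ψ C).1 (ψ D).1
          rw [(ψ C).2, (ψ D).2, hcard'] at this
          omega
        have hB : (⟨(ψ C).1 ∪ (ψ D).1, hu⟩ : V) ∈ K (ψ C).1 :=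
          (hmemK _ _).mpr subset_union_left
        have hB' : (⟨(ψ C).1 ∪ (ψ D).1, hu⟩ : V) ∈ K (ψ D).1 :=
          (hmemK _ _).mpr subset_union_right
        rw [← hKim C] at hB
        rw [← hKim D] at hB'
        obtain ⟨A1, hA1, hA1e⟩ := mem_image.mp hB
        obtain ⟨A2, hA2, hA2e⟩ := mem_image.mp hB'
        have : A1 = A2 := φ.toEquiv.injective (hA1e.trans hA2e.symm)
        subst this
        have hCA : C.1 ⊆ A1.1 := (hmemK _ _).mp hA1
        have hDA : D.1 ⊆ A1.1 := (hmemK _ _).mp hA2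
        refine ⟨hCD, ?_⟩
        have hsub : C.1 ∪ D.1 ⊆ A1.1 := union_subset hCA hDA
        have h1 : (C.1 ∪ D.1).card ≤ m + 1 := by
          have := card_le_card hsub; rw [A1.2] at this; exact this
        have h2 := card_union_add_card_inter C.1 D.1
        rw [C.2, D.2] at h2
        have h3 : (C.1 ∩ D.1).card ≤ m - 1 := by
          by_contra h
          push_neg at h
          have e1 : C.1 ∩ D.1 = C.1 :=
            eq_of_subset_of_card_le inter_subset_left (by rw [C.2]; omega)
          have e2 : C.1 ∩ D.1 = D.1 :=
            eq_of_subset_of_card_le inter_subset_right (by rw [D.2]; omega)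
          exact hCD (Subtype.ext (e1 ▸ e2))
        omega
      · rintro ⟨hne', hcard'⟩
        have hu : (C.1 ∪ D.1).card = m + 1 := by
          have := card_union_add_card_inter C.1 D.1
          rw [C.2, D.2, hcard'] at this
          omega
        set A : V := ⟨C.1 ∪ D.1, hu⟩ with hA
        have h1 : (ψ C).1 ⊆ (φ A).1 := hψ C A subset_union_left
        have h2 : (ψ D).1 ⊆ (φ A).1 := hψ D A subset_union_right
        have hne2 : ψ C ≠ ψ D := fun h => hne' (hψinj h)
        refine ⟨hne2, ?_⟩
        have hsub : (ψ C).1 ∪ (ψ D).1 ⊆ (φ A).1 := union_subset h1 h2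
        have hle : ((ψ C).1 ∪ (ψ D).1).card ≤ m + 1 := by
          have := card_le_card hsub; rw [(φ A).2] at this; exact this
        have h4 := card_union_add_card_inter (ψ C).1 (ψ D).1
        rw [(ψ C).2, (ψ D).2] at h4
        have h3 : ((ψ C).1 ∩ (ψ D).1).card ≤ m - 1 := by
          by_contra h
          push_neg at h
          have e1 : (ψ C).1 ∩ (ψ D).1 = (ψ C).1 :=
            eq_of_subset_of_card_le inter_subset_left (by rw [(ψ C).2]; omega)
          have e2 : (ψ C).1 ∩ (ψ D).1 = (ψ D).1 :=
            eq_of_subset_of_card_le inter_subset_right (by rw [(ψ D).2]; omega)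
          exact hne2 (Subtype.ext (e1 ▸ e2))
        omega
    -- build the induced automorphism of J(n, m)
    set ψe : {C : Finset (Fin n) // C.card = m} ≃ {C : Finset (Fin n) // C.card = m} :=
      Equiv.ofBijective ψ ((Finite.injective_iff_bijective).mp hψinj) with hψe
    have hψe_app : ∀ C, ψe C = ψ C := fun C => rfl
    set φ' : JohnsonGraph n m ≃g JohnsonGraph n m :=
      ⟨ψe, by intro C D; rw [hψe]; exact hadj_iff C D⟩ with hφ'
    obtain ⟨σ, hσ⟩ := ih n hm (by omega) φ'
    have hσψ : ∀ C : {C : Finset (Fin n) // C.card = m}, (ψ C).1 = C.1.image σ := by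
      intro C
      have := hσ C
      rwa [hφ'] at this
    refine ⟨σ, ?_⟩
    intro A
    have hcard_im : (A.1.image σ).card = m + 1 := by
      rw [card_image_of_injective _ σ.injective, A.2]
    symm
    apply eq_of_subset_of_card_le
    · intro y hy
      obtain ⟨x, hx, rfl⟩ := mem_image.mp hy
      obtain ⟨z, hz, hzx⟩ := exists_mem_ne (by rw [A.2]; omega) x
      have hCcard : (A.1.erase z).card = m := by
        rw [card_erase_of_mem hz, A.2]; omega
      set C : {C : Finset (Fin n) // C.card = m} := ⟨A.1.erase z, hCcard⟩
      have hCA : C.1 ⊆ A.1 := erase_subset z A.1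
      have hxC : x ∈ C.1 := mem_erase.mpr ⟨fun h => hzx (h ▸ rfl), hx⟩
      have := hψ C A hCA
      apply this
      rw [hσψ C]
      exact mem_image_of_mem σ hxC
    · rw [hcard_im, (φ A).2]

def complEquiv (n m : ℕ) (hmn : m + 1 ≤ n) :
    {A : Finset (Fin n) // A.card = m} ≃ {A : Finset (Fin n) // A.card = n - m} where
  toFun A := ⟨A.1ᶜ, by rw [card_compl, Fintype.card_fin, A.2]⟩
  invFun B := ⟨B.1ᶜ, by rw [card_compl, Fintype.card_fin, B.2]; omega⟩
  left_inv A := Subtype.ext (by simp)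
  right_inv B := Subtype.ext (by simp)

def complIso (n m : ℕ) (hm1 : 1 ≤ m) (hmn : m + 1 ≤ n) :
    JohnsonGraph n m ≃g JohnsonGraph n (n - m) where
  toEquiv := complEquiv n m hmn
  map_rel_iff' := by
    intro A B
    have hval : ∀ X : {A : Finset (Fin n) // A.card = m},
        ((complEquiv n m hmn) X).1 = X.1ᶜ := fun _ => rfl
    show ((complEquiv n m hmn A ≠ complEquiv n m hmn B) ∧
        (((complEquiv n m hmn A).1 ∩ (complEquiv n m hmn B).1).card = n - m - 1)) ↔ _
    have hne : complEquiv n m hmn A ≠ complEquiv n m hmn B ↔ A ≠ B :=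
      (Equiv.injective _).ne_iff
    have hcardc : ((complEquiv n m hmn A).1 ∩ (complEquiv n m hmn B).1).card
        = n - (A.1 ∪ B.1).card := by
      rw [hval, hval, ← compl_union, card_compl, Fintype.card_fin]
    have hsum : (A.1 ∪ B.1).card + (A.1 ∩ B.1).card = 2 * m := by
      rw [card_union_add_card_inter, A.2, B.2]; omega
    have hle : (A.1 ∪ B.1).card ≤ n := by
      have := card_le_univ (A.1 ∪ B.1); rwa [Fintype.card_fin] at this
    rw [hne, hcardc]
    constructor
    · rintro ⟨h1, h2⟩; exact ⟨h1, by omega⟩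
    · rintro ⟨h1, h2⟩; exact ⟨h1, by omega⟩

theorem stmt15 (n m : ℕ) (hm1 : 1 ≤ m) (hm2 : m ≤ n - 1) (hne : n ≠ 2 * m)
    (φ : JohnsonGraph n m ≃g JohnsonGraph n m) :
    ∃ σ : Equiv.Perm (Fin n), ∀ A, (φ A).1 = A.1.image σ := by
  have hn2 : 2 ≤ n := by omega
  have hmn : m + 1 ≤ n := by omega
  rcases lt_trichotomy (2 * m) n with h | h | h
  · exact key_main m n hm1 h φ
  · exact absurd h.symm hne
  · -- n < 2 m : use complements
    have hk1 : 1 ≤ n - m := by omega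
    have hk2 : 2 * (n - m) < n := by omega
    have hkn : (n - m) + 1 ≤ n := by omega
    set c := complIso n m hm1 hmn with hc
    set φ' : JohnsonGraph n (n - m) ≃g JohnsonGraph n (n - m) :=
      (c.symm.trans φ).trans c with hφ'
    obtain ⟨σ, hσ⟩ := key_main (n - m) n hk1 hk2 φ'
    refine ⟨σ, ?_⟩
    intro A
    have h1 := hσ (c A)
    have h2 : φ' (c A) = c (φ A) := by
      rw [hφ']
      simp [RelIso.trans_apply]
    rw [h2] at h1
    have h3 : (c (φ A)).1 = (φ A).1ᶜ := rfl
    have h4 : (c A).1 = A.1ᶜ := rfl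
    rw [h3, h4] at h1
    -- h1 : (φ A).1ᶜ = A.1ᶜ.image σ
    have h5 : A.1ᶜ.image σ = (A.1.image σ)ᶜ := by
      ext x
      simp only [mem_image, mem_compl]
      constructor
      · rintro ⟨y, hy, rfl⟩ ⟨z, hz, hzx⟩
        exact hy (σ.injective hzx ▸ hz)
      · intro hx
        refine ⟨σ.symm x, fun hmem => hx ⟨σ.symm x, hmem, by simp⟩, by simp⟩
    rw [h5] at h1
    have := congrArg compl h1
    rwa [compl_compl, compl_compl] at this
end
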